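/- Let 𝒞 ⊆ ℝ^n be a nonempty polytope (the convex hull of a nonempty finite set) contained in the nonnegative orthant ℝ_{≥0}^n. Then there exists a finite family W of pairs (a, b) with a ∈ ℝ_{≥0}^n and b ≥ 0 such that the lower contour set lcs(𝒞) equals the intersection over (a, b) ∈ W of the sets {x ∈ ℝ_{≥0}^n : a · x ≤ b}. -/
import Mathlib

open Finset

set_option linter.unusedSectionVars false

noncomputable section FM

variable {ι : Type*} [Fintype ι] [DecidableEq ι]

def fmDot (a x : ι → ℝ) : ℝ := ∑ j, a j * x j

def fmSol (W : Finset ((ι → ℝ) × ℝ)) : Set (ι → ℝ) := {x | ∀ ab ∈ W, fmDot ab.1 x ≤ ab.2}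

lemma fmDot_update (a x : ι → ℝ) (i : ι) (t : ℝ) :
    fmDot a (Function.update x i t) = fmDot a x + a i * (t - x i) := by
  unfold fmDot
  have h : ∀ j, a j * Function.update x i t j
      = a j * x j + (if j = i then a i * (t - x i) else 0) := by
    intro j
    by_cases h : j = i
    · subst h; simp [Function.update_self]; ring
    · simp [Function.update_of_ne h, h]
  simp_rw [h]
  rw [Finset.sum_add_distrib, Finset.sum_ite_eq' Finset.univ i]
  simp

lemma fmDot_comb (c d : ℝ) (a b x : ι → ℝ) :
    fmDot (c • a + d • b) x = c * fmDot a x + d * fmDot b x := by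
  unfold fmDot
  rw [Finset.mul_sum, Finset.mul_sum, ← Finset.sum_add_distrib]
  congr 1; funext j
  simp [mul_assoc, add_mul]

lemma fm_elim_one (i : ι) (W : Finset ((ι → ℝ) × ℝ)) :
    ∃ W' : Finset ((ι → ℝ) × ℝ),
      ∀ x, (∃ t, Function.update x i t ∈ fmSol W) ↔ x ∈ fmSol W' := by
  classical
  set W0 : Finset ((ι → ℝ) × ℝ) := W.filter (fun ab => ab.1 i = 0) with hW0
  set Wp : Finset ((ι → ℝ) × ℝ) := W.filter (fun ab => 0 < ab.1 i) with hWp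
  set Wm : Finset ((ι → ℝ) × ℝ) := W.filter (fun ab => ab.1 i < 0) with hWm
  set comb : ((ι → ℝ) × ℝ) → ((ι → ℝ) × ℝ) → ((ι → ℝ) × ℝ) := fun p m =>
    ((-m.1 i) • p.1 + (p.1 i) • m.1, (-m.1 i) * p.2 + (p.1 i) * m.2) with hcomb
  refine ⟨W0 ∪ (Wp ×ˢ Wm).image (fun pm => comb pm.1 pm.2), fun x => ⟨?_, ?_⟩⟩
  · rintro ⟨t, ht⟩ ab hab
    rcases Finset.mem_union.mp hab with h0 | hc
    · have h0' := Finset.mem_filter.mp h0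
      have := ht ab h0'.1
      rw [fmDot_update] at this
      rw [h0'.2] at this
      linarith
    · obtain ⟨pm, hpm, rfl⟩ := Finset.mem_image.mp hc
      obtain ⟨hp, hm⟩ := Finset.mem_product.mp hpm
      have hp' := Finset.mem_filter.mp hp
      have hm' := Finset.mem_filter.mp hm
      set p := pm.1; set m := pm.2
      have hip : 0 < p.1 i := hp'.2
      have him : m.1 i < 0 := hm'.2
      have h1 : fmDot p.1 (Function.update x i t) ≤ p.2 := ht p hp'.1
      have h2 : fmDot m.1 (Function.update x i t) ≤ m.2 := ht m hm'.1
      have hzero : (comb p m).1 i = 0 := by simp [hcomb]; ring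
      have key : fmDot (comb p m).1 x = fmDot (comb p m).1 (Function.update x i t) := by
        rw [fmDot_update, hzero]; ring
      rw [key]
      show fmDot (comb p m).1 (Function.update x i t) ≤ (-m.1 i) * p.2 + (p.1 i) * m.2
      rw [show (comb p m).1 = (-m.1 i) • p.1 + (p.1 i) • m.1 from rfl, fmDot_comb]
      have := mul_le_mul_of_nonneg_left h1 (by linarith : (0:ℝ) ≤ -m.1 i)
      have := mul_le_mul_of_nonneg_left h2 (le_of_lt hip)
      linarith
  · intro hx
    -- upper/lower bound functions
    set U : ((ι → ℝ) × ℝ) → ℝ := fun p => (p.2 - fmDot p.1 x + p.1 i * x i) / p.1 i with hU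
    have keyP : ∀ p ∈ Wp, ∀ t : ℝ, t ≤ U p ↔ fmDot p.1 (Function.update x i t) ≤ p.2 := by
      intro p hp t
      have hip : 0 < p.1 i := (Finset.mem_filter.mp hp).2
      rw [fmDot_update]
      simp only [hU]
      rw [le_div_iff₀ hip]
      constructor <;> intro h <;> nlinarith
    have keyM : ∀ m ∈ Wm, ∀ t : ℝ, U m ≤ t ↔ fmDot m.1 (Function.update x i t) ≤ m.2 := by
      intro m hm t
      have him : m.1 i < 0 := (Finset.mem_filter.mp hm).2
      rw [fmDot_update]
      simp only [hU]
      rw [div_le_iff_of_neg him]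
      constructor <;> intro h <;> nlinarith
    have keyPM : ∀ p ∈ Wp, ∀ m ∈ Wm, U m ≤ U p := by
      intro p hp m hm
      have hip : 0 < p.1 i := (Finset.mem_filter.mp hp).2
      have him : m.1 i < 0 := (Finset.mem_filter.mp hm).2
      have hcon : fmDot (comb p m).1 x ≤ (-m.1 i) * p.2 + (p.1 i) * m.2 := by
        have : comb p m ∈ W0 ∪ (Wp ×ˢ Wm).image (fun pm => comb pm.1 pm.2) :=
          Finset.mem_union_right _ (Finset.mem_image.mpr ⟨(p, m), Finset.mem_product.mpr ⟨hp, hm⟩, rfl⟩)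
        exact hx _ this
      rw [show (comb p m).1 = (-m.1 i) • p.1 + (p.1 i) • m.1 from rfl, fmDot_comb] at hcon
      simp only [hU]
      rw [show (m.2 - fmDot m.1 x + m.1 i * x i) / m.1 i
          = (-(m.2 - fmDot m.1 x + m.1 i * x i)) / (-m.1 i) by rw [neg_div_neg_eq]]
      rw [div_le_div_iff₀ (by linarith) hip]
      nlinarith
    have hW0sol : ∀ ab ∈ W0, ∀ t : ℝ, fmDot ab.1 (Function.update x i t) ≤ ab.2 := by
      intro ab hab t
      have h0 := (Finset.mem_filter.mp hab).2
      have := hx ab (Finset.mem_union_left _ hab)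
      rw [fmDot_update, h0]
      linarith
    by_cases hWpne : Wp.Nonempty
    · set t := (Wp.image U).min' (hWpne.image U) with htdef
      obtain ⟨p0, hp0, hp0t⟩ := Finset.mem_image.mp ((Wp.image U).min'_mem (hWpne.image U))
      refine ⟨t, fun ab hab => ?_⟩
      rcases lt_trichotomy (ab.1 i) 0 with hneg | hzero | hpos
      · have habm : ab ∈ Wm := Finset.mem_filter.mpr ⟨hab, hneg⟩
        refine (keyM ab habm t).mp ?_
        rw [htdef, ← hp0t]
        exact keyPM p0 hp0 ab habm
      · exact hW0sol ab (Finset.mem_filter.mpr ⟨hab, hzero⟩) t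
      · have habp : ab ∈ Wp := Finset.mem_filter.mpr ⟨hab, hpos⟩
        refine (keyP ab habp t).mp ?_
        exact Finset.min'_le _ _ (Finset.mem_image_of_mem U habp)
    · by_cases hWmne : Wm.Nonempty
      · set t := (Wm.image U).max' (hWmne.image U) with htdef
        refine ⟨t, fun ab hab => ?_⟩
        rcases lt_trichotomy (ab.1 i) 0 with hneg | hzero | hpos
        · have habm : ab ∈ Wm := Finset.mem_filter.mpr ⟨hab, hneg⟩
          refine (keyM ab habm t).mp ?_
          exact Finset.le_max' _ _ (Finset.mem_image_of_mem U habm)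
        · exact hW0sol ab (Finset.mem_filter.mpr ⟨hab, hzero⟩) t
        · exact absurd (Finset.mem_filter.mpr ⟨hab, hpos⟩ : ab ∈ Wp) (fun h => hWpne ⟨ab, h⟩)
      · refine ⟨0, fun ab hab => ?_⟩
        rcases lt_trichotomy (ab.1 i) 0 with hneg | hzero | hpos
        · exact absurd (Finset.mem_filter.mpr ⟨hab, hneg⟩ : ab ∈ Wm) (fun h => hWmne ⟨ab, h⟩)
        · exact hW0sol ab (Finset.mem_filter.mpr ⟨hab, hzero⟩) 0
        · exact absurd (Finset.mem_filter.mpr ⟨hab, hpos⟩ : ab ∈ Wp) (fun h => hWpne ⟨ab, h⟩)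



lemma fm_elim_set (E : Finset ι) (W : Finset ((ι → ℝ) × ℝ)) :
    ∃ W' : Finset ((ι → ℝ) × ℝ),
      ∀ x : ι → ℝ, (∃ y, (∀ j ∉ E, y j = x j) ∧ y ∈ fmSol W) ↔ x ∈ fmSol W' := by
  classical
  induction E using Finset.induction_on with
  | empty =>
    refine ⟨W, fun x => ⟨?_, fun h => ⟨x, fun _ _ => rfl, h⟩⟩⟩
    rintro ⟨y, hy, hyW⟩
    have : x = y := funext fun j => (hy j (Finset.notMem_empty j)).symm
    rwa [this]
  | @insert i E hiE ih =>
    obtain ⟨W₁, hW₁⟩ := ih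
    obtain ⟨W', hW'⟩ := fm_elim_one i W₁
    refine ⟨W', fun x => ?_⟩
    rw [← hW']
    constructor
    · rintro ⟨y, hy, hyW⟩
      refine ⟨y i, (hW₁ (Function.update x i (y i))).mp ⟨y, fun j hj => ?_, hyW⟩⟩
      by_cases hji : j = i
      · subst hji; simp
      · rw [Function.update_of_ne hji]
        exact hy j (by simp [hji, hj])
    · rintro ⟨t, ht⟩
      obtain ⟨y, hy, hyW⟩ := (hW₁ (Function.update x i t)).mpr ht
      refine ⟨y, fun j hj => ?_, hyW⟩
      have hjE : j ∉ E := fun h => hj (Finset.mem_insert_of_mem h)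
      have hji : j ≠ i := fun h => hj (h ▸ Finset.mem_insert_self i E)
      rw [hy j hjE, Function.update_of_ne hji]

end FM
theorem statement0 (n : ℕ) (S : Finset (Fin n → ℝ)) (hSne : S.Nonempty)
    (𝒞 : Set (Fin n → ℝ)) (h𝒞 : 𝒞 = convexHull ℝ (S : Set (Fin n → ℝ)))
    (h𝒞nn : ∀ x ∈ 𝒞, ∀ k, 0 ≤ x k) :
    ∃ W : Finset ((Fin n → ℝ) × ℝ),
      (∀ ab ∈ W, (∀ k, 0 ≤ ab.1 k) ∧ 0 ≤ ab.2) ∧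
      {x : Fin n → ℝ | (∀ k, 0 ≤ x k) ∧ ∃ x' ∈ 𝒞, ∀ k, x k ≤ x' k}
        = ⋂ ab ∈ W, {x : Fin n → ℝ | (∀ k, 0 ≤ x k) ∧ ∑ k, ab.1 k * x k ≤ ab.2} := by
  classical
  subst h𝒞
  set ι : Type := (Fin n) ⊕ {s : Fin n → ℝ // s ∈ S} with hι
  -- rows of the big system in variables (x, λ)
  set rowA : Fin n → ((ι → ℝ) × ℝ) :=
    fun k => (fun i => if i = Sum.inl k then (-1:ℝ) else 0, 0) with hrowA
  set rowB : Fin n → ((ι → ℝ) × ℝ) := fun k =>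
    (Sum.elim (fun k' => if k' = k then (1:ℝ) else 0) (fun s : {s : Fin n → ℝ // s ∈ S} => -(s.1 k)), 0) with hrowB
  set rowC : {s : Fin n → ℝ // s ∈ S} → ((ι → ℝ) × ℝ) :=
    fun s => (fun i => if i = Sum.inr s then (-1:ℝ) else 0, 0) with hrowC
  set rowD1 : ((ι → ℝ) × ℝ) := (Sum.elim (fun _ => 0) (fun _ => 1), 1) with hrowD1
  set rowD2 : ((ι → ℝ) × ℝ) := (Sum.elim (fun _ => 0) (fun _ => -1), -1) with hrowD2
  set W₀ : Finset ((ι → ℝ) × ℝ) :=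
    ((Finset.univ.image rowA ∪ Finset.univ.image rowB) ∪ Finset.univ.image rowC)
      ∪ {rowD1, rowD2} with hWW₀
  -- dot products of the rows
  have hsingle : ∀ (c : ι) (z : ι → ℝ), (∑ i, (if i = c then (-1:ℝ) else 0) * z i) = -z c := by
    intro c z
    rw [Finset.sum_eq_single c (fun b _ hb => by simp [hb]) (fun h => absurd (Finset.mem_univ c) h)]
    simp
  have dA : ∀ (k : Fin n) (z : ι → ℝ), fmDot (rowA k).1 z = -z (Sum.inl k) := by
    intro k z; exact hsingle _ z
  have dC : ∀ (s : {s : Fin n → ℝ // s ∈ S}) (z : ι → ℝ), fmDot (rowC s).1 z = -z (Sum.inr s) := by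
    intro s z; exact hsingle _ z
  have dB : ∀ (k : Fin n) (z : ι → ℝ),
      fmDot (rowB k).1 z = z (Sum.inl k) - ∑ s : {s : Fin n → ℝ // s ∈ S}, z (Sum.inr s) * s.1 k := by
    intro k z
    show (∑ i : ι, Sum.elim (fun k' => if k' = k then (1:ℝ) else 0)
        (fun s : {s : Fin n → ℝ // s ∈ S} => -(s.1 k)) i * z i) = _
    rw [Fintype.sum_sum_type]
    have h1 : (∑ k' : Fin n,
        Sum.elim (fun k' => if k' = k then (1:ℝ) else 0)
          (fun s : {s : Fin n → ℝ // s ∈ S} => -(s.1 k)) (Sum.inl k') * z (Sum.inl k'))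
        = z (Sum.inl k) := by
      rw [Finset.sum_eq_single k (fun b _ hb => by simp [hb]) (fun h => absurd (Finset.mem_univ k) h)]
      simp
    rw [h1]
    have h2 : (∑ s : {s : Fin n → ℝ // s ∈ S},
        Sum.elim (fun k' => if k' = k then (1:ℝ) else 0)
          (fun s : {s : Fin n → ℝ // s ∈ S} => -(s.1 k)) (Sum.inr s) * z (Sum.inr s))
        = -∑ s : {s : Fin n → ℝ // s ∈ S}, z (Sum.inr s) * s.1 k := by
      rw [← Finset.sum_neg_distrib]
      exact Finset.sum_congr rfl fun s _ => by simp; ring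
    rw [h2]; ring
  have dD1 : ∀ z : ι → ℝ, fmDot rowD1.1 z = ∑ s : {s : Fin n → ℝ // s ∈ S}, z (Sum.inr s) := by
    intro z
    show (∑ i : ι, Sum.elim (fun _ => (0:ℝ)) (fun _ => (1:ℝ)) i * z i) = _
    rw [Fintype.sum_sum_type]
    simp
  have dD2 : ∀ z : ι → ℝ, fmDot rowD2.1 z = -∑ s : {s : Fin n → ℝ // s ∈ S}, z (Sum.inr s) := by
    intro z
    show (∑ i : ι, Sum.elim (fun _ => (0:ℝ)) (fun _ => (-1:ℝ)) i * z i) = _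
    rw [Fintype.sum_sum_type]
    simp
  -- membership of rows
  have memA : ∀ k, rowA k ∈ W₀ := fun k =>
    Finset.mem_union_left _ (Finset.mem_union_left _ (Finset.mem_union_left _
      (Finset.mem_image_of_mem rowA (Finset.mem_univ k))))
  have memB : ∀ k, rowB k ∈ W₀ := fun k =>
    Finset.mem_union_left _ (Finset.mem_union_left _ (Finset.mem_union_right _
      (Finset.mem_image_of_mem rowB (Finset.mem_univ k))))
  have memC : ∀ s, rowC s ∈ W₀ := fun s =>
    Finset.mem_union_left _ (Finset.mem_union_right _
      (Finset.mem_image_of_mem rowC (Finset.mem_univ s)))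
  have memD1 : rowD1 ∈ W₀ :=
    Finset.mem_union_right _ (Finset.mem_insert_self _ _)
  have memD2 : rowD2 ∈ W₀ :=
    Finset.mem_union_right _ (Finset.mem_insert_of_mem (Finset.mem_singleton_self _))
  -- characterization of fmSol W₀
  have hsolW₀ : ∀ z : ι → ℝ, z ∈ fmSol W₀ ↔
      ((∀ k, 0 ≤ z (Sum.inl k)) ∧ (∀ s, 0 ≤ z (Sum.inr s)) ∧
        (∑ s : {s : Fin n → ℝ // s ∈ S}, z (Sum.inr s)) = 1 ∧
        ∀ k, z (Sum.inl k) ≤ ∑ s : {s : Fin n → ℝ // s ∈ S}, z (Sum.inr s) * s.1 k) := by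
    intro z
    constructor
    · intro h
      refine ⟨fun k => ?_, fun s => ?_, ?_, fun k => ?_⟩
      · have h' := h (rowA k) (memA k); rw [dA] at h'
        have hz : (rowA k).2 = (0:ℝ) := rfl
        rw [hz] at h'; linarith
      · have h' := h (rowC s) (memC s); rw [dC] at h'
        have hz : (rowC s).2 = (0:ℝ) := rfl
        rw [hz] at h'; linarith
      · have h1 := h rowD1 memD1; rw [dD1] at h1
        have h2 := h rowD2 memD2; rw [dD2] at h2
        have hz1 : rowD1.2 = (1:ℝ) := rfl
        have hz2 : rowD2.2 = (-1:ℝ) := rfl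
        rw [hz1] at h1; rw [hz2] at h2
        linarith
      · have h' := h (rowB k) (memB k); rw [dB] at h'
        have hz : (rowB k).2 = (0:ℝ) := rfl
        rw [hz] at h'; linarith
    · rintro ⟨h1, h2, h3, h4⟩ ab hab
      rcases Finset.mem_union.mp hab with hab | hab
      · rcases Finset.mem_union.mp hab with hab | hab
        · rcases Finset.mem_union.mp hab with hab | hab
          · obtain ⟨k, _, rfl⟩ := Finset.mem_image.mp hab
            rw [dA]
            have : (rowA k).2 = (0:ℝ) := rfl
            rw [this]; linarith [h1 k]
          · obtain ⟨k, _, rfl⟩ := Finset.mem_image.mp hab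
            rw [dB]
            have : (rowB k).2 = (0:ℝ) := rfl
            rw [this]; linarith [h4 k]
        · obtain ⟨s, _, rfl⟩ := Finset.mem_image.mp hab
          rw [dC]
          have : (rowC s).2 = (0:ℝ) := rfl
          rw [this]; linarith [h2 s]
      · rcases Finset.mem_insert.mp hab with rfl | hab
        · rw [dD1, h3]
        · rw [Finset.mem_singleton.mp hab, dD2, h3]
  -- eliminate the λ-coordinates
  set E : Finset ι := Finset.univ.image (Sum.inr : {s : Fin n → ℝ // s ∈ S} → ι) with hE
  obtain ⟨W₁, hW₁⟩ := fm_elim_set E W₀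
  have hinlE : ∀ k : Fin n, (Sum.inl k : ι) ∉ E := by intro k; simp [hE]
  have hinrE : ∀ s, (Sum.inr s : ι) ∈ E := by
    intro s; exact Finset.mem_image_of_mem _ (Finset.mem_univ s)
  -- dot of a row at Sum.elim x 0
  have dotElim : ∀ (a : ι → ℝ) (x : Fin n → ℝ),
      fmDot a (Sum.elim x (fun _ => 0)) = ∑ k, a (Sum.inl k) * x k := by
    intro a x
    show (∑ i : ι, a i * Sum.elim x (fun _ => (0:ℝ)) i) = _
    rw [Fintype.sum_sum_type]
    simp
  -- the key equivalence
  have claimL : ∀ x : Fin n → ℝ,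
      ((∀ k, 0 ≤ x k) ∧ ∃ x' ∈ convexHull ℝ (S : Set (Fin n → ℝ)), ∀ k, x k ≤ x' k)
        ↔ Sum.elim x (fun _ => 0) ∈ fmSol W₁ := by
    intro x
    constructor
    · rintro ⟨hxnn, x', hx', hxle⟩
      rw [Finset.convexHull_eq] at hx'
      obtain ⟨w, hw0, hw1, hwc⟩ := hx'
      refine (hW₁ _).mp ⟨Sum.elim x (fun s => w s.1), fun j hj => ?_, ?_⟩
      · rcases j with k | s
        · rfl
        · exact absurd (hinrE s) hj
      · rw [hsolW₀]
        have hx'eq : ∀ k, x' k = ∑ s : {s : Fin n → ℝ // s ∈ S}, w s.1 * s.1 k := by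
          intro k
          rw [← hwc, Finset.centerMass_eq_of_sum_1 _ _ hw1]
          rw [Finset.sum_apply]
          rw [← Finset.sum_coe_sort S (fun v => (w v • id v : Fin n → ℝ) k)]
          exact Finset.sum_congr rfl fun s _ => by simp
        refine ⟨fun k => hxnn k, fun s => hw0 s.1 s.2, ?_, fun k => ?_⟩
        · show (∑ s : {s : Fin n → ℝ // s ∈ S}, w s.1) = 1
          rw [Finset.sum_coe_sort S w]; exact hw1
        · show x k ≤ ∑ s : {s : Fin n → ℝ // s ∈ S}, w s.1 * s.1 k
          rw [← hx'eq k]; exact hxle k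
    · intro h
      obtain ⟨y, hy, hyW⟩ := (hW₁ _).mpr h
      obtain ⟨h1, h2, h3, h4⟩ := (hsolW₀ y).mp hyW
      have hxk : ∀ k, y (Sum.inl k) = x k := fun k => hy _ (hinlE k)
      refine ⟨fun k => by rw [← hxk k]; exact h1 k, ?_⟩
      set w : (Fin n → ℝ) → ℝ := fun v => if hv : v ∈ S then y (Sum.inr ⟨v, hv⟩) else 0 with hwdef
      have hwcoe : ∀ s : {s : Fin n → ℝ // s ∈ S}, w s.1 = y (Sum.inr s) := by
        intro s
        simp only [hwdef]
        rw [dif_pos s.2, Subtype.coe_eta]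
      have hw0 : ∀ v ∈ S, 0 ≤ w v := by
        intro v hv
        have := hwcoe ⟨v, hv⟩
        rw [this]; exact h2 ⟨v, hv⟩
      have hwsum : ∑ v ∈ S, w v = 1 := by
        rw [← Finset.sum_coe_sort S w]
        rw [Finset.sum_congr rfl fun s _ => hwcoe s]
        exact h3
      refine ⟨S.centerMass w id, Finset.centerMass_mem_convexHull S hw0 (by rw [hwsum]; norm_num)
        (fun v hv => by simpa using hv), fun k => ?_⟩
      rw [Finset.centerMass_eq_of_sum_1 _ _ hwsum]
      have hmass : (∑ v ∈ S, w v • id v) k = ∑ s : {s : Fin n → ℝ // s ∈ S}, y (Sum.inr s) * s.1 k := by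
        rw [Finset.sum_apply]
        rw [← Finset.sum_coe_sort S (fun v => (w v • id v : Fin n → ℝ) k)]
        exact Finset.sum_congr rfl fun s _ => by simp [hwcoe s]
      rw [hmass, ← hxk k]
      exact h4 k
  -- 0 ≤ b for all rows of W₁
  have h0L : (∀ k : Fin n, (0:ℝ) ≤ (fun _ : Fin n => (0:ℝ)) k) ∧
      ∃ x' ∈ convexHull ℝ (S : Set (Fin n → ℝ)), ∀ k : Fin n, (fun _ : Fin n => (0:ℝ)) k ≤ x' k := by
    obtain ⟨s0, hs0⟩ := hSne
    refine ⟨fun _ => le_refl 0, s0, subset_convexHull ℝ _ (by simpa using hs0), fun k => ?_⟩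
    exact h𝒞nn s0 (subset_convexHull ℝ _ (by simpa using hs0)) k
  have hbnn : ∀ ab ∈ W₁, (0:ℝ) ≤ ab.2 := by
    intro ab hab
    have := (claimL (fun _ : Fin n => 0)).mp h0L ab hab
    rw [dotElim] at this
    simpa using this
  -- final system
  refine ⟨W₁.image (fun ab => ((fun k => max (ab.1 (Sum.inl k)) 0), max ab.2 0)), ?_, ?_⟩
  · rintro ab' hab'
    obtain ⟨ab, _, rfl⟩ := Finset.mem_image.mp hab'
    exact ⟨fun k => le_max_right _ _, le_max_right _ _⟩
  · ext x
    simp only [Set.mem_setOf_eq, Set.mem_iInter]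
    constructor
    · intro hxL
      intro ab' hab'
      obtain ⟨ab, habW₁, rfl⟩ := Finset.mem_image.mp hab'
      obtain ⟨hxnn, x', hx', hxle⟩ := hxL
      refine ⟨hxnn, ?_⟩
      set xh : Fin n → ℝ := fun k => if 0 ≤ ab.1 (Sum.inl k) then x k else 0 with hxh
      have hxhL : (∀ k, 0 ≤ xh k) ∧ ∃ x' ∈ convexHull ℝ (S : Set (Fin n → ℝ)), ∀ k, xh k ≤ x' k := by
        refine ⟨fun k => ?_, x', hx', fun k => ?_⟩
        · simp only [hxh]
          by_cases hk : 0 ≤ ab.1 (Sum.inl k)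
          · rw [if_pos hk]; exact hxnn k
          · rw [if_neg hk]
        · simp only [hxh]
          by_cases hk : 0 ≤ ab.1 (Sum.inl k)
          · rw [if_pos hk]; exact hxle k
          · rw [if_neg hk]; exact le_trans (hxnn k) (hxle k)
      have hcon := (claimL xh).mp hxhL ab habW₁
      rw [dotElim] at hcon
      have heq : (∑ k, max (ab.1 (Sum.inl k)) 0 * x k) = ∑ k, ab.1 (Sum.inl k) * xh k := by
        refine Finset.sum_congr rfl fun k _ => ?_
        simp only [hxh]
        by_cases hk : 0 ≤ ab.1 (Sum.inl k)
        · rw [if_pos hk, max_eq_left hk]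
        · rw [if_neg hk, max_eq_right (le_of_not_ge hk), mul_zero, zero_mul]
      rw [heq]
      exact le_trans hcon (le_max_left _ _)
    · intro hx
      have hxnn : ∀ k, 0 ≤ x k := by
        -- we get nonnegativity from claimL at the end; but we need it only if W₁ nonempty
        -- Instead: prove x ∈ fmSol W₁ directly, then use claimL
        exact ((claimL x).mpr (by
          intro ab hab
          have hmem := hx _ (Finset.mem_image_of_mem _ hab)
          obtain ⟨hxnn', hsum⟩ := hmem
          rw [dotElim]
          have h1 : (∑ k, ab.1 (Sum.inl k) * x k) ≤ ∑ k, max (ab.1 (Sum.inl k)) 0 * x k :=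
            Finset.sum_le_sum fun k _ => mul_le_mul_of_nonneg_right (le_max_left _ _) (hxnn' k)
          have h2 : max ab.2 0 = ab.2 := max_eq_left (hbnn ab hab)
          calc (∑ k, ab.1 (Sum.inl k) * x k) ≤ _ := h1
            _ ≤ max ab.2 0 := hsum
            _ = ab.2 := h2)).1
      refine ⟨hxnn, ((claimL x).mpr ?_).2⟩
      intro ab hab
      have hmem := hx _ (Finset.mem_image_of_mem _ hab)
      obtain ⟨hxnn', hsum⟩ := hmem
      rw [dotElim]
      have h1 : (∑ k, ab.1 (Sum.inl k) * x k) ≤ ∑ k, max (ab.1 (Sum.inl k)) 0 * x k :=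
        Finset.sum_le_sum fun k _ => mul_le_mul_of_nonneg_right (le_max_left _ _) (hxnn' k)
      have h2 : max ab.2 0 = ab.2 := max_eq_left (hbnn ab hab)
      calc (∑ k, ab.1 (Sum.inl k) * x k) ≤ _ := h1
        _ ≤ max ab.2 0 := hsum
        _ = ab.2 := h2
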